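/- Let f: 2^E → ℝ≥0 be monotone submodular with multilinear extension F. Let E = E_1 ∪ ... ∪ E_k with the E_i pairwise disjoint, and let x ∈ [0,1]^E with ∑_{e∈E_i} x(e) ≤ 1 for each i. Let T be a random set formed by independently sampling at most one element from each E_i, choosing element e with probability x(e). Then E[f(T)] ≥ F(x). -/

import Mathlib

open Finset
open scoped Classical

set_option linter.unusedSectionVars false

section Aux

variable {E : Type*} [Fintype E] [DecidableEq E]

/-- weight of a subset `R` of block `Bi` under independent sampling -/
noncomputable def wB (x : E → ℝ) (Bi R : Finset E) : ℝ :=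
  if R ⊆ Bi then (∏ e ∈ R, x e) * ∏ e ∈ Bi \ R, (1 - x e) else 0

/-- weight of a subset `R` of block `Bi` under one-per-block sampling -/
noncomputable def vB (x : E → ℝ) (Bi R : Finset E) : ℝ :=
  (if R = ∅ then 1 - ∑ e ∈ Bi, x e else 0) + ∑ e ∈ Bi, if R = {e} then x e else 0

lemma wB_of_subset {x : E → ℝ} {Bi R : Finset E} (h : R ⊆ Bi) :
    wB x Bi R = (∏ e ∈ R, x e) * ∏ e ∈ Bi \ R, (1 - x e) := by
  simp [wB, h]

lemma wB_nonneg {x : E → ℝ} (hx0 : ∀ e, 0 ≤ x e) {Bi : Finset E}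
    (hx1 : ∀ e ∈ Bi, x e ≤ 1) (R : Finset E) : 0 ≤ wB x Bi R := by
  unfold wB
  split_ifs with h
  · exact mul_nonneg (prod_nonneg fun e _ => hx0 e)
      (prod_nonneg fun e he => by have := hx1 e (mem_sdiff.mp he).1; linarith)
  · exact le_refl 0

lemma vB_nonneg {x : E → ℝ} (hx0 : ∀ e, 0 ≤ x e) {Bi : Finset E}
    (hs : ∑ e ∈ Bi, x e ≤ 1) (R : Finset E) : 0 ≤ vB x Bi R := by
  unfold vB
  have h1 : (0:ℝ) ≤ if R = ∅ then 1 - ∑ e ∈ Bi, x e else 0 := by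
    split_ifs with h
    · linarith
    · exact le_refl 0
  have h2 : (0:ℝ) ≤ ∑ e ∈ Bi, if R = {e} then x e else 0 :=
    sum_nonneg fun e _ => by split_ifs; exacts [hx0 e, le_refl 0]
  linarith

lemma wB_eq_zero {x : E → ℝ} {Bi R : Finset E} (h : ¬ R ⊆ Bi) : wB x Bi R = 0 := by
  simp [wB, h]

lemma vB_eq_zero {x : E → ℝ} {Bi R : Finset E} (h : ¬ R ⊆ Bi) : vB x Bi R = 0 := by
  unfold vB
  have hne : R ≠ ∅ := by rintro rfl; exact h (empty_subset _)
  rw [if_neg hne]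
  have : ∀ e ∈ Bi, (if R = {e} then x e else 0) = 0 := by
    intro e he
    split_ifs with hR
    · exact absurd (hR ▸ singleton_subset_iff.mpr he) h
    · rfl
  rw [Finset.sum_congr rfl this]
  simp

lemma vB_empty (x : E → ℝ) (Bi : Finset E) : vB x Bi ∅ = 1 - ∑ e ∈ Bi, x e := by
  unfold vB
  rw [if_pos rfl]
  have : ∑ e ∈ Bi, (if (∅ : Finset E) = {e} then x e else 0) = 0 :=
    Finset.sum_eq_zero fun e _ => if_neg fun h => (singleton_ne_empty e) h.symm
  rw [this, add_zero]

lemma vB_singleton {x : E → ℝ} {Bi : Finset E} {e : E} (he : e ∈ Bi) :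
    vB x Bi {e} = x e := by
  unfold vB
  rw [if_neg (singleton_ne_empty e)]
  have : ∀ e' ∈ Bi, (if ({e} : Finset E) = {e'} then x e' else 0)
      = if e = e' then x e' else 0 := by
    intro e' _
    simp [Finset.singleton_inj]
  rw [Finset.sum_congr rfl this, Finset.sum_ite_eq Bi e x, if_pos he, zero_add]

/-- total mass of the independent distribution on a block is 1 -/
lemma sum_prod_one (x : E → ℝ) (s : Finset E) :
    ∑ R ∈ s.powerset, (∏ e ∈ R, x e) * ∏ e ∈ s \ R, (1 - x e) = 1 := by
  rw [← Finset.prod_add]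
  simp

lemma wB_sum (x : E → ℝ) (Bi : Finset E) : ∑ R : Finset E, wB x Bi R = 1 := by
  rw [← Finset.sum_subset (Finset.subset_univ Bi.powerset)
    (fun R _ hR => wB_eq_zero (by simpa using hR))]
  rw [Finset.sum_congr rfl (fun R hR => wB_of_subset (mem_powerset.mp hR))]
  exact sum_prod_one x Bi

/-- marginal of the independent distribution -/
lemma wB_marginal (x : E → ℝ) (Bi : Finset E) (e : E) :
    ∑ R : Finset E, (if e ∈ R then wB x Bi R else 0) = if e ∈ Bi then x e else 0 := by
  by_cases he : e ∈ Bi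
  · rw [if_pos he]
    rw [← Finset.sum_subset (Finset.subset_univ Bi.powerset)
      (fun R _ hR => by
        split_ifs with h
        · exact wB_eq_zero (by simpa using hR)
        · rfl)]
    have hBi : Bi = insert e (Bi.erase e) := (Finset.insert_erase he).symm
    rw [hBi, Finset.sum_powerset_insert (Finset.notMem_erase e Bi)]
    have h1 : ∑ t ∈ (Bi.erase e).powerset,
        (if e ∈ t then wB x (insert e (Bi.erase e)) t else 0) = 0 :=
      Finset.sum_eq_zero fun t ht => by
        rw [if_neg (fun hc => (Finset.notMem_erase e Bi) (mem_powerset.mp ht hc))]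
    rw [h1, zero_add]
    have h2 : ∀ t ∈ (Bi.erase e).powerset,
        (if e ∈ insert e t then wB x (insert e (Bi.erase e)) (insert e t) else 0)
        = x e * ((∏ a ∈ t, x a) * ∏ a ∈ (Bi.erase e) \ t, (1 - x a)) := by
      intro t ht
      have het : e ∉ t := fun hc => (Finset.notMem_erase e Bi) (mem_powerset.mp ht hc)
      rw [if_pos (mem_insert_self e t)]
      rw [wB_of_subset (insert_subset_insert e (mem_powerset.mp ht))]
      rw [Finset.prod_insert het]
      have hsd : insert e (Bi.erase e) \ insert e t = (Bi.erase e) \ t := by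
        ext b
        simp only [mem_sdiff, mem_insert, mem_erase]
        constructor
        · rintro ⟨hb1 | hb1, hb2⟩
          · exact absurd (Or.inl hb1) hb2
          · exact ⟨hb1, fun hb => hb2 (Or.inr hb)⟩
        · rintro ⟨⟨hb1, hb2⟩, hb3⟩
          exact ⟨Or.inr ⟨hb1, hb2⟩, fun hb => by
            rcases hb with hb | hb
            · exact hb1 hb
            · exact hb3 hb⟩
      rw [hsd, mul_assoc]
    rw [Finset.sum_congr rfl h2, ← Finset.mul_sum, sum_prod_one, mul_one]
  · rw [if_neg he]
    exact Finset.sum_eq_zero fun R _ => by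
      split_ifs with h
      · exact wB_eq_zero (fun hc => he (hc h))
      · rfl

/-- submodularity bound -/
lemma submod_bound {f : Finset E → ℝ}
    (hsub : ∀ S T : Finset E, f S + f T ≥ f (S ∩ T) + f (S ∪ T))
    (A : Finset E) : ∀ R : Finset E, f (A ∪ R) ≤ f A + ∑ e ∈ R, (f (A ∪ {e}) - f A) := by
  intro R
  induction R using Finset.induction_on with
  | empty => simp
  | @insert a R ha ih =>
    have h1 := hsub (A ∪ R) (A ∪ {a})
    have hint : (A ∪ R) ∩ (A ∪ {a}) = A := by
      rw [← Finset.union_inter_distrib_left]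
      have : R ∩ {a} = ∅ := by
        ext b; simp only [mem_inter, mem_singleton, notMem_empty, iff_false, not_and]
        rintro hb rfl; exact ha hb
      rw [this, union_empty]
    have huni : (A ∪ R) ∪ (A ∪ {a}) = A ∪ insert a R := by
      ext b; simp only [mem_union, mem_insert, mem_singleton]; tauto
    rw [hint, huni] at h1
    rw [Finset.sum_insert ha]
    linarith

/-- the key per-block step -/
lemma block_step {f : Finset E → ℝ}
    (hsub : ∀ S T : Finset E, f S + f T ≥ f (S ∩ T) + f (S ∪ T))
    {x : E → ℝ} (hx0 : ∀ e, 0 ≤ x e) {Bi : Finset E} (hs : ∑ e ∈ Bi, x e ≤ 1)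
    (A : Finset E) :
    ∑ R : Finset E, wB x Bi R * f (A ∪ R) ≤ ∑ R : Finset E, vB x Bi R * f (A ∪ R) := by
  have hx1e : ∀ e ∈ Bi, x e ≤ 1 := fun e he =>
    le_trans (Finset.single_le_sum (fun a _ => hx0 a) he) hs
  -- the v-side equals f A + ∑_{e∈Bi} x e * (f(A∪{e}) - f A)
  have hv : ∑ R : Finset E, vB x Bi R * f (A ∪ R)
      = f A + ∑ e ∈ Bi, x e * (f (A ∪ {e}) - f A) := by
    have hpt : ∀ R : Finset E, vB x Bi R * f (A ∪ R)
        = (if R = ∅ then (1 - ∑ e ∈ Bi, x e) * f (A ∪ R) else 0)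
          + ∑ e ∈ Bi, (if R = {e} then x e * f (A ∪ R) else 0) := by
      intro R
      unfold vB
      rw [add_mul, Finset.sum_mul]
      congr 1
      · split_ifs <;> ring
      · exact Finset.sum_congr rfl fun e _ => by split_ifs <;> ring
    rw [Finset.sum_congr rfl fun R _ => hpt R, Finset.sum_add_distrib]
    have h1 : ∑ R : Finset E, (if R = ∅ then (1 - ∑ e ∈ Bi, x e) * f (A ∪ R) else 0)
        = (1 - ∑ e ∈ Bi, x e) * f A := by
      rw [Finset.sum_ite_eq' Finset.univ (∅ : Finset E)
        (fun R => (1 - ∑ e ∈ Bi, x e) * f (A ∪ R)), if_pos (mem_univ _), union_empty]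
    have h2 : ∑ R : Finset E, ∑ e ∈ Bi, (if R = {e} then x e * f (A ∪ R) else 0)
        = ∑ e ∈ Bi, x e * f (A ∪ {e}) := by
      rw [Finset.sum_comm]
      exact Finset.sum_congr rfl fun e _ => by
        rw [Finset.sum_ite_eq' Finset.univ ({e} : Finset E)
          (fun R => x e * f (A ∪ R)), if_pos (mem_univ _)]
    rw [h1, h2]
    have : ∑ e ∈ Bi, x e * (f (A ∪ {e}) - f A)
        = (∑ e ∈ Bi, x e * f (A ∪ {e})) - (∑ e ∈ Bi, x e) * f A := by
      rw [Finset.sum_mul, ← Finset.sum_sub_distrib]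
      exact Finset.sum_congr rfl fun e _ => by ring
    rw [this]; ring
  -- the w-side is at most the same quantity
  have hw : ∑ R : Finset E, wB x Bi R * f (A ∪ R)
      ≤ f A + ∑ e ∈ Bi, x e * (f (A ∪ {e}) - f A) := by
    have step1 : ∑ R : Finset E, wB x Bi R * f (A ∪ R)
        ≤ ∑ R : Finset E, wB x Bi R * (f A + ∑ e ∈ R, (f (A ∪ {e}) - f A)) :=
      Finset.sum_le_sum fun R _ =>
        mul_le_mul_of_nonneg_left (submod_bound hsub A R) (wB_nonneg hx0 hx1e R)
    have step2 : ∑ R : Finset E, wB x Bi R * (f A + ∑ e ∈ R, (f (A ∪ {e}) - f A))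
        = f A + ∑ e ∈ Bi, x e * (f (A ∪ {e}) - f A) := by
      have hpt : ∀ R : Finset E, wB x Bi R * (f A + ∑ e ∈ R, (f (A ∪ {e}) - f A))
          = wB x Bi R * f A
            + ∑ e : E, (if e ∈ R then wB x Bi R else 0) * (f (A ∪ {e}) - f A) := by
        intro R
        rw [mul_add]
        congr 1
        have : ∑ e ∈ R, (f (A ∪ {e}) - f A)
            = ∑ e : E, if e ∈ R then (f (A ∪ {e}) - f A) else 0 := by
          rw [Finset.sum_ite_mem, univ_inter]
        rw [this, Finset.mul_sum]
        exact Finset.sum_congr rfl fun e _ => by split_ifs <;> ring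
      rw [Finset.sum_congr rfl fun R _ => hpt R, Finset.sum_add_distrib,
        ← Finset.sum_mul, wB_sum, one_mul, Finset.sum_comm]
      congr 1
      have : ∀ e : E, ∑ R : Finset E, (if e ∈ R then wB x Bi R else 0) * (f (A ∪ {e}) - f A)
          = (if e ∈ Bi then x e else 0) * (f (A ∪ {e}) - f A) := by
        intro e
        rw [← Finset.sum_mul, wB_marginal]
      rw [Finset.sum_congr rfl fun e _ => this e]
      have : ∀ e : E, (if e ∈ Bi then x e else 0) * (f (A ∪ {e}) - f A)
          = if e ∈ Bi then x e * (f (A ∪ {e}) - f A) else 0 := by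
        intro e; split_ifs <;> ring
      rw [Finset.sum_congr rfl fun e _ => this e, Finset.sum_ite_mem, univ_inter]
    linarith
  linarith [hv, hw]

end Aux
section Main

variable {E : Type*} [Fintype E] [DecidableEq E]

/-- hybrid weight: blocks in `J` use one-per-block weights, others independent -/
noncomputable def tJ (x : E → ℝ) {k : ℕ} (B : Fin k → Finset E)
    (J : Finset (Fin k)) (S : Finset E) : ℝ :=
  ∏ i : Fin k, (if i ∈ J then vB x (B i) (S ∩ B i) else wB x (B i) (S ∩ B i))

lemma G_empty {k : ℕ} (B : Fin k → Finset E)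
    (hdisj : ∀ i j : Fin k, i ≠ j → Disjoint (B i) (B j))
    (hcover : Finset.univ.biUnion B = (Finset.univ : Finset E))
    (x : E → ℝ) (S : Finset E) :
    tJ x B ∅ S = (∏ e ∈ S, x e) * ∏ e ∈ Sᶜ, (1 - x e) := by
  have hex : ∀ e : E, ∃ i, e ∈ B i := by
    intro e
    have : e ∈ Finset.univ.biUnion B := hcover ▸ mem_univ e
    simpa using this
  unfold tJ
  have h0 : ∀ i : Fin k, (if i ∈ (∅ : Finset (Fin k)) then vB x (B i) (S ∩ B i)
      else wB x (B i) (S ∩ B i)) = (∏ e ∈ S ∩ B i, x e) * ∏ e ∈ B i \ S, (1 - x e) := by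
    intro i
    rw [if_neg (notMem_empty i), wB_of_subset (inter_subset_right)]
    congr 1
    congr 1
    ext b; simp only [mem_sdiff, mem_inter]; tauto
  rw [Finset.prod_congr rfl fun i _ => h0 i, Finset.prod_mul_distrib]
  congr 1
  · have hb : Finset.univ.biUnion (fun i => S ∩ B i) = S := by
      ext e
      simp only [mem_biUnion, mem_univ, true_and, mem_inter]
      constructor
      · rintro ⟨i, hi, _⟩; exact hi
      · intro he; obtain ⟨i, hi⟩ := hex e; exact ⟨i, he, hi⟩
    have hpd : Set.PairwiseDisjoint ((Finset.univ : Finset (Fin k)) : Set (Fin k)) (fun i => S ∩ B i) := by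
      intro i _ i' _ hii'
      exact Finset.disjoint_of_subset_left inter_subset_right
        (Finset.disjoint_of_subset_right inter_subset_right (hdisj i i' hii'))
    conv_rhs => rw [← hb]
    rw [Finset.prod_biUnion hpd]
  · have hb : Finset.univ.biUnion (fun i => B i \ S) = Sᶜ := by
      ext e
      simp only [mem_biUnion, mem_univ, true_and, mem_sdiff, Finset.mem_compl]
      constructor
      · rintro ⟨i, _, hi⟩; exact hi
      · intro he; obtain ⟨i, hi⟩ := hex e; exact ⟨i, hi, he⟩
    have hpd : Set.PairwiseDisjoint ((Finset.univ : Finset (Fin k)) : Set (Fin k)) (fun i => B i \ S) := by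
      intro i _ i' _ hii'
      exact Finset.disjoint_of_subset_left (sdiff_subset)
        (Finset.disjoint_of_subset_right (sdiff_subset) (hdisj i i' hii'))
    conv_rhs => rw [← hb]
    rw [Finset.prod_biUnion hpd]

lemma G_step {k : ℕ} (B : Fin k → Finset E)
    (hdisj : ∀ i j : Fin k, i ≠ j → Disjoint (B i) (B j))
    {f : Finset E → ℝ}
    (hsub : ∀ S T : Finset E, f S + f T ≥ f (S ∩ T) + f (S ∪ T))
    {x : E → ℝ} (hx0 : ∀ e, 0 ≤ x e)
    (hx1 : ∀ i : Fin k, ∑ e ∈ B i, x e ≤ 1)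
    {J : Finset (Fin k)} {j : Fin k} (hj : j ∉ J) :
    ∑ S : Finset E, tJ x B J S * f S ≤ ∑ S : Finset E, tJ x B (insert j J) S * f S := by
  have split : ∀ u : Finset E → ℝ, ∑ S : Finset E, u S
      = ∑ A ∈ Finset.univ.filter (fun A : Finset E => A ∩ B j = ∅),
          ∑ R ∈ (B j).powerset, u (A ∪ R) := by
    intro u
    rw [← Finset.sum_product']
    refine (Finset.sum_nbij' (fun S => (S \ B j, S ∩ B j)) (fun p => p.1 ∪ p.2)
      ?_ ?_ ?_ ?_ ?_).symm.symm
    · intro S _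
      rw [Finset.mem_product]
      constructor
      · rw [mem_filter]
        refine ⟨mem_univ _, ?_⟩
        ext b; simp only [mem_inter, mem_sdiff, notMem_empty, iff_false, not_and]; tauto
      · exact mem_powerset.mpr inter_subset_right
    · intro p _; exact mem_univ _
    · intro S _; exact Finset.sdiff_union_inter S (B j)
    · intro p hp
      rw [Finset.mem_product, mem_filter, mem_powerset] at hp
      obtain ⟨⟨_, h1⟩, h2⟩ := hp
      have hA : ∀ b ∈ p.1, b ∉ B j := by
        intro b hb hbj
        have : b ∈ p.1 ∩ B j := mem_inter.mpr ⟨hb, hbj⟩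
        rw [h1] at this; exact absurd this (notMem_empty b)
      have e1 : (p.1 ∪ p.2) \ B j = p.1 := by
        ext b
        simp only [mem_sdiff, mem_union]
        constructor
        · rintro ⟨hb | hb, hbj⟩
          · exact hb
          · exact absurd (h2 hb) hbj
        · intro hb; exact ⟨Or.inl hb, hA b hb⟩
      have e2 : (p.1 ∪ p.2) ∩ B j = p.2 := by
        ext b
        simp only [mem_inter, mem_union]
        constructor
        · rintro ⟨hb | hb, hbj⟩
          · exact absurd hbj (hA b hb)
          · exact hb
        · intro hb; exact ⟨Or.inr hb, h2 hb⟩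
      exact Prod.ext e1 e2
    · intro S _; rw [Finset.sdiff_union_inter]
  rw [split (fun S => tJ x B J S * f S), split (fun S => tJ x B (insert j J) S * f S)]
  apply Finset.sum_le_sum
  intro A hA
  have hAj : A ∩ B j = ∅ := (mem_filter.mp hA).2
  have hA' : ∀ b ∈ A, b ∉ B j := by
    intro b hb hbj
    have : b ∈ A ∩ B j := mem_inter.mpr ⟨hb, hbj⟩
    rw [hAj] at this; exact absurd this (notMem_empty b)
  set C : ℝ := ∏ i ∈ Finset.univ.erase j,
    (if i ∈ J then vB x (B i) (A ∩ B i) else wB x (B i) (A ∩ B i)) with hC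
  have hCnn : 0 ≤ C := by
    refine Finset.prod_nonneg fun i _ => ?_
    have hle : ∀ e ∈ B i, x e ≤ 1 := fun e he =>
      le_trans (Finset.single_le_sum (fun a _ => hx0 a) he) (hx1 i)
    split_ifs
    · exact vB_nonneg hx0 (hx1 i) _
    · exact wB_nonneg hx0 hle _
  have hterm : ∀ (J' : Finset (Fin k)) (R : Finset E), R ⊆ B j →
      tJ x B J' (A ∪ R) * f (A ∪ R)
      = (if j ∈ J' then vB x (B j) R else wB x (B j) R) *
        ((∏ i ∈ Finset.univ.erase j,
          (if i ∈ J' then vB x (B i) (A ∩ B i) else wB x (B i) (A ∩ B i)))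
          * f (A ∪ R)) := by
    intro J' R hRj
    unfold tJ
    rw [← Finset.mul_prod_erase Finset.univ _ (mem_univ j)]
    have h1 : (A ∪ R) ∩ B j = R := by
      ext b
      simp only [mem_inter, mem_union]
      constructor
      · rintro ⟨hb | hb, hbj⟩
        · exact absurd hbj (hA' b hb)
        · exact hb
      · intro hb; exact ⟨Or.inr hb, hRj hb⟩
    have h2 : ∀ i ∈ Finset.univ.erase j, (A ∪ R) ∩ B i = A ∩ B i := by
      intro i hi
      have hij : i ≠ j := (mem_erase.mp hi).1
      have hd : ∀ b ∈ R, b ∉ B i := fun b hb =>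
        Finset.disjoint_left.mp (hdisj j i (Ne.symm hij)) (hRj hb)
      ext b
      simp only [mem_inter, mem_union]
      constructor
      · rintro ⟨hb | hb, hbi⟩
        · exact ⟨hb, hbi⟩
        · exact absurd hbi (hd b hb)
      · rintro ⟨hb, hbi⟩; exact ⟨Or.inl hb, hbi⟩
    rw [h1]
    rw [Finset.prod_congr rfl fun i hi => by rw [h2 i hi]]
    ring
  have hins : ∀ i ∈ Finset.univ.erase j,
      (if i ∈ insert j J then vB x (B i) (A ∩ B i) else wB x (B i) (A ∩ B i))
      = (if i ∈ J then vB x (B i) (A ∩ B i) else wB x (B i) (A ∩ B i)) := by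
    intro i hi
    have hij : i ≠ j := (mem_erase.mp hi).1
    simp [Finset.mem_insert, hij]
  have lhs_eq : ∑ R ∈ (B j).powerset, tJ x B J (A ∪ R) * f (A ∪ R)
      = C * ∑ R : Finset E, wB x (B j) R * f (A ∪ R) := by
    rw [Finset.sum_congr rfl fun R hR => hterm J R (mem_powerset.mp hR)]
    rw [Finset.sum_congr rfl fun R _ => by rw [if_neg hj]]
    rw [Finset.sum_subset (Finset.subset_univ (B j).powerset)
      (fun R _ hR => by rw [wB_eq_zero (by simpa using hR), zero_mul])]
    rw [Finset.mul_sum]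
    exact Finset.sum_congr rfl fun R _ => by ring
  have rhs_eq : ∑ R ∈ (B j).powerset, tJ x B (insert j J) (A ∪ R) * f (A ∪ R)
      = C * ∑ R : Finset E, vB x (B j) R * f (A ∪ R) := by
    rw [Finset.sum_congr rfl fun R hR => hterm (insert j J) R (mem_powerset.mp hR)]
    rw [Finset.sum_congr rfl fun R _ => by
      rw [if_pos (Finset.mem_insert_self j J), Finset.prod_congr rfl hins]]
    rw [Finset.sum_subset (Finset.subset_univ (B j).powerset)
      (fun R _ hR => by rw [vB_eq_zero (by simpa using hR), zero_mul])]
    rw [Finset.mul_sum]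
    exact Finset.sum_congr rfl fun R _ => by ring
  rw [lhs_eq, rhs_eq]
  exact mul_le_mul_of_nonneg_left (block_step hsub hx0 (hx1 j) A) hCnn

end Main
section Final

variable {E : Type*} [Fintype E] [DecidableEq E]

noncomputable def pick (T : Finset E) : Option E :=
  if h : T.Nonempty then some h.choose else none

lemma pick_mem {T : Finset E} {e : E} (h : pick T = some e) : e ∈ T := by
  unfold pick at h
  by_cases hT : T.Nonempty
  · rw [dif_pos hT] at h
    cases Option.some.inj h
    exact hT.choose_spec
  · rw [dif_neg hT] at h
    cases h

lemma pick_empty : pick (∅ : Finset E) = none := dif_neg (by simp)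

lemma pick_singleton (e : E) : pick ({e} : Finset E) = some e := by
  unfold pick
  have h : ({e} : Finset E).Nonempty := ⟨e, mem_singleton_self e⟩
  rw [dif_pos h]
  exact congrArg some (mem_singleton.mp h.choose_spec)

lemma vB_eq_zero' {x : E → ℝ} {Bi R : Finset E} (hne : R ≠ ∅)
    (hns : ∀ e : E, R ≠ {e}) : vB x Bi R = 0 := by
  unfold vB
  rw [if_neg hne, Finset.sum_eq_zero fun e _ => if_neg (hns e)]
  simp

lemma G_univ {k : ℕ} (B : Fin k → Finset E)
    (hdisj : ∀ i j : Fin k, i ≠ j → Disjoint (B i) (B j))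
    (hcover : Finset.univ.biUnion B = (Finset.univ : Finset E))
    (f : Finset E → ℝ) (x : E → ℝ) :
    ∑ S : Finset E, tJ x B Finset.univ S * f S
    = ∑ σ ∈ (Finset.univ : Finset (Fin k → Option E)).filter
        (fun σ => ∀ (i : Fin k) (e : E), σ i = some e → e ∈ B i),
      (∏ i : Fin k, Option.elim (σ i) (1 - ∑ e ∈ B i, x e) (fun e => x e)) *
        f (Finset.univ.filter (fun e => ∃ i, σ i = some e)) := by
  have hex : ∀ e : E, ∃ i, e ∈ B i := by
    intro e
    have : e ∈ Finset.univ.biUnion B := hcover ▸ mem_univ e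
    simpa using this
  have h1 : ∑ S : Finset E, tJ x B Finset.univ S * f S
      = ∑ S ∈ Finset.univ.filter
          (fun S : Finset E => ∀ i : Fin k, S ∩ B i = ∅ ∨ ∃ e, S ∩ B i = {e}),
          tJ x B Finset.univ S * f S := by
    refine (Finset.sum_subset (Finset.filter_subset _ _) ?_).symm
    intro S _ hS
    rw [mem_filter] at hS
    push_neg at hS
    obtain ⟨i, hi1, hi2⟩ := hS (mem_univ S)
    have : tJ x B Finset.univ S = 0 := by
      unfold tJ
      refine Finset.prod_eq_zero (mem_univ i) ?_
      rw [if_pos (mem_univ i)]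
      exact vB_eq_zero' hi1.ne_empty hi2
    rw [this, zero_mul]
  rw [h1]
  have hkey : ∀ σ : Fin k → Option E, (∀ (i : Fin k) (e : E), σ i = some e → e ∈ B i) →
      ∀ i : Fin k, (Finset.univ.filter (fun e => ∃ i', σ i' = some e)) ∩ B i
        = Option.elim (σ i) ∅ (fun e => {e}) := by
    intro σ hval i
    ext b
    simp only [mem_inter, mem_filter, mem_univ, true_and]
    cases hσi : σ i with
    | none =>
      simp only [Option.elim, notMem_empty, iff_false, not_and]
      rintro ⟨i', hi'⟩ hbB
      have hbB' : b ∈ B i' := hval i' b hi'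
      have heq : i' = i := by
        by_contra hne
        exact Finset.disjoint_left.mp (hdisj i' i hne) hbB' hbB
      rw [heq, hσi] at hi'
      cases hi'
    | some e =>
      simp only [Option.elim, mem_singleton]
      constructor
      · rintro ⟨⟨i', hi'⟩, hbB⟩
        have hbB' : b ∈ B i' := hval i' b hi'
        have heq : i' = i := by
          by_contra hne
          exact Finset.disjoint_left.mp (hdisj i' i hne) hbB' hbB
        rw [heq, hσi] at hi'
        exact (Option.some.inj hi').symm
      · rintro rfl
        exact ⟨⟨i, hσi⟩, hval i b hσi⟩
  have hleft : ∀ S ∈ Finset.univ.filter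
      (fun S : Finset E => ∀ i : Fin k, S ∩ B i = ∅ ∨ ∃ e, S ∩ B i = {e}),
      Finset.univ.filter (fun e => ∃ i, pick (S ∩ B i) = some e) = S := by
    intro S hS
    rw [mem_filter] at hS
    ext e
    simp only [mem_filter, mem_univ, true_and]
    constructor
    · rintro ⟨i, hi⟩
      exact mem_inter.mp (pick_mem hi) |>.1
    · intro he
      obtain ⟨i, hi⟩ := hex e
      rcases hS.2 i with hc | ⟨e', hc⟩
      · exact absurd (hc ▸ mem_inter.mpr ⟨he, hi⟩) (notMem_empty e)
      · have : e ∈ S ∩ B i := mem_inter.mpr ⟨he, hi⟩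
        rw [hc, mem_singleton] at this
        exact ⟨i, by rw [hc, ← this]; exact pick_singleton e⟩
  refine Finset.sum_nbij' (fun S => fun i => pick (S ∩ B i))
    (fun σ => Finset.univ.filter (fun e => ∃ i, σ i = some e)) ?_ ?_ ?_ ?_ ?_
  · intro S _
    rw [mem_filter]
    exact ⟨mem_univ _, fun i e h => (mem_inter.mp (pick_mem h)).2⟩
  · intro σ hσ
    rw [mem_filter] at hσ ⊢
    refine ⟨mem_univ _, fun i => ?_⟩
    rw [hkey σ hσ.2 i]
    cases σ i with
    | none => exact Or.inl rfl
    | some e => exact Or.inr ⟨e, rfl⟩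
  · exact hleft
  · intro σ hσ
    rw [mem_filter] at hσ
    funext i
    show pick _ = σ i
    rw [hkey σ hσ.2 i]
    cases σ i with
    | none => exact pick_empty
    | some e => exact pick_singleton e
  · intro S hS
    have hf : Finset.univ.filter (fun e => ∃ i, pick (S ∩ B i) = some e) = S :=
      hleft S hS
    rw [hf]
    congr 1
    rw [mem_filter] at hS
    unfold tJ
    refine Finset.prod_congr rfl fun i _ => ?_
    rw [if_pos (mem_univ i)]
    show vB x (B i) (S ∩ B i) = (pick (S ∩ B i)).elim (1 - ∑ e ∈ B i, x e) fun e => x e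
    rcases hS.2 i with hc | ⟨e, hc⟩
    · rw [hc, pick_empty, vB_empty]
      rfl
    · have he : e ∈ B i := (mem_inter.mp (hc ▸ mem_singleton_self e)).2
      rw [hc, pick_singleton, vB_singleton he]
      rfl

end Final

theorem rounding_one_per_block
    {E : Type*} [Fintype E] [DecidableEq E]
    (k : ℕ) (B : Fin k → Finset E)
    (hdisj : ∀ i j : Fin k, i ≠ j → Disjoint (B i) (B j))
    (hcover : Finset.univ.biUnion B = (Finset.univ : Finset E))
    (f : Finset E → ℝ) (hnn : ∀ S, 0 ≤ f S)
    (hmono : ∀ S T : Finset E, S ⊆ T → f S ≤ f T)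
    (hsub : ∀ S T : Finset E, f S + f T ≥ f (S ∩ T) + f (S ∪ T))
    (x : E → ℝ) (hx : ∀ e, 0 ≤ x e)
    (hx1 : ∀ i : Fin k, ∑ e ∈ B i, x e ≤ 1)
    (F : (E → ℝ) → ℝ)
    (hF : ∀ z : E → ℝ, F z = ∑ S : Finset E,
      f S * (∏ e ∈ S, z e) * ∏ e ∈ Sᶜ, (1 - z e)) :
    ∑ σ ∈ (Finset.univ : Finset (Fin k → Option E)).filter
        (fun σ => ∀ (i : Fin k) (e : E), σ i = some e → e ∈ B i),
      (∏ i : Fin k, Option.elim (σ i) (1 - ∑ e ∈ B i, x e) (fun e => x e)) *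
        f (Finset.univ.filter (fun e => ∃ i, σ i = some e))
    ≥ F x := by
  rw [ge_iff_le, hF x]
  have e1 : ∑ S : Finset E, f S * (∏ e ∈ S, x e) * ∏ e ∈ Sᶜ, (1 - x e)
      = ∑ S : Finset E, tJ x B ∅ S * f S :=
    Finset.sum_congr rfl fun S _ => by rw [G_empty B hdisj hcover x S]; ring
  have mono : ∀ J : Finset (Fin k),
      ∑ S : Finset E, tJ x B ∅ S * f S ≤ ∑ S : Finset E, tJ x B J S * f S := by
    intro J
    induction J using Finset.induction_on with
    | empty => exact le_refl _
    | @insert j J hj ih => exact le_trans ih (G_step B hdisj hsub hx hx1 hj)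
  rw [e1]
  exact le_of_le_of_eq (mono Finset.univ) (G_univ B hdisj hcover f x)
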